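/- Let a : ℝ → ℝ be a measurable, essentially bounded, nonnegative function. The scalar ordinary differential equation x'(t) + a(t)x(t) = 0 is exponentially stable (i.e., there exist M > 0 and μ > 0 such that every solution with x(t₀) = x₀ satisfies |x(t)| ≤ M e^{-μ(t - t₀)} |x₀| for all t ≥ t₀ ≥ 0) if and only if there exists R > 0 such that liminf_{t → ∞} ∫_t^{t+R} a(s) ds > 0. -/

import Mathlib

open MeasureTheory Filter Real

/-- Lemma 6: the scalar ODE x' + a(t)x = 0 (with nonnegative, measurable,
essentially bounded coefficient) is exponentially stable iff there is R > 0
with liminf_{t→∞} ∫_t^{t+R} a > 0. Solutions are x(t) = x₀ exp(-∫_{t₀}^t a). -/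
theorem stmt0 (a : ℝ → ℝ) (hmeas : Measurable a) (hbd : ∃ A : ℝ, ∀ t, |a t| ≤ A)
    (hpos : ∀ t, 0 ≤ a t) :
    (∃ M > (0:ℝ), ∃ μ > (0:ℝ), ∀ t₀ t x₀ : ℝ, 0 ≤ t₀ → t₀ ≤ t →
        |x₀ * Real.exp (-∫ s in t₀..t, a s)| ≤ M * Real.exp (-μ * (t - t₀)) * |x₀|) ↔
      (∃ R > (0:ℝ), 0 < Filter.liminf (fun t => ∫ s in t..(t + R), a s) Filter.atTop) := by
  obtain ⟨A, hA⟩ := hbd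
  have hint : ∀ s t : ℝ, IntervalIntegrable a volume s t := by
    intro s t
    constructor <;>
    · refine MeasureTheory.Integrable.mono'
        (g := fun _ => A) (integrableOn_const measure_Ioc_lt_top.ne)
        hmeas.aestronglyMeasurable.restrict (ae_of_all _ fun x => ?_)
      simpa using hA x
  have hnn : ∀ s t : ℝ, s ≤ t → 0 ≤ ∫ x in s..t, a x := fun s t hst =>
    intervalIntegral.integral_nonneg hst (fun x _ => hpos x)
  have hmono : ∀ s u t : ℝ, s ≤ u → u ≤ t → (∫ x in s..u, a x) ≤ ∫ x in s..t, a x := by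
    intro s u t hsu hut
    rw [← intervalIntegral.integral_add_adjacent_intervals (hint s u) (hint u t)]
    have := hnn u t hut
    linarith
  constructor
  · rintro ⟨M, hM, μ, hμ, h⟩
    set R := (|Real.log M| + 1) / μ with hRdef
    have hR : 0 < R := by positivity
    refine ⟨R, hR, ?_⟩
    have hcb : IsCoboundedUnder (· ≥ ·) atTop (fun t => ∫ s in t..(t + R), a s) := by
      refine Filter.IsBoundedUnder.isCoboundedUnder_ge (isBoundedUnder_of ⟨A * R, fun t => ?_⟩)
      have h1 : (∫ s in t..(t + R), a s) ≤ ∫ s in t..(t + R), A := by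
        refine intervalIntegral.integral_mono_on (by linarith) (hint _ _)
          intervalIntegrable_const (fun x _ => (abs_le.1 (hA x)).2)
      have h2 : (∫ s in t..(t + R), (A:ℝ)) = R * A := by
        simp [mul_comm]
      rw [h2] at h1; linarith [h1]
    have hev : ∀ᶠ t in atTop, (1:ℝ) ≤ ∫ s in t..(t + R), a s := by
      filter_upwards [eventually_ge_atTop (0:ℝ)] with t ht
      have h1 := h t (t + R) 1 ht (by linarith)
      simp only [one_mul, mul_one, abs_one, abs_of_pos (Real.exp_pos _)] at h1
      have h2 : -(∫ s in t..(t + R), a s) ≤ Real.log M + (-μ * (t + R - t)) := by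
        have := Real.log_le_log (Real.exp_pos _) h1
        rwa [Real.log_exp, Real.log_mul (ne_of_gt hM) (ne_of_gt (Real.exp_pos _)),
          Real.log_exp] at this
      have h3 : μ * R = |Real.log M| + 1 := by
        rw [hRdef]; field_simp
      have h4 : Real.log M ≤ |Real.log M| := le_abs_self _
      nlinarith [h2, h3, h4]
    exact lt_of_lt_of_le one_pos (Filter.le_liminf_of_le hcb hev)
  · rintro ⟨R, hR, hlim⟩
    set c := Filter.liminf (fun t => ∫ s in t..(t + R), a s) Filter.atTop with hc
    have hbdd : IsBoundedUnder (· ≥ ·) atTop (fun t => ∫ s in t..(t + R), a s) :=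
      isBoundedUnder_of ⟨0, fun t => hnn t (t + R) (by linarith)⟩
    have hev : ∀ᶠ t in atTop, c / 2 < ∫ s in t..(t + R), a s :=
      Filter.eventually_lt_of_lt_liminf (by linarith) hbdd
    obtain ⟨T₀, hT₀⟩ := Filter.eventually_atTop.1 hev
    set T : ℝ := max T₀ 0 with hTdef
    have hT0 : 0 ≤ T := le_max_right _ _
    have hT : ∀ t, T ≤ t → c / 2 ≤ ∫ s in t..(t + R), a s := fun t ht =>
      le_of_lt (hT₀ t (le_trans (le_max_left _ _) ht))
    set ε := c / 2 with hεdef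
    have hε : 0 < ε := by positivity
    set μ := ε / R with hμdef
    have hμ : 0 < μ := by positivity
    refine ⟨Real.exp (ε + μ * T), Real.exp_pos _, μ, hμ, ?_⟩
    intro t₀ t x₀ ht₀ ht
    have key : μ * (t - t₀) - (ε + μ * T) ≤ ∫ s in t₀..t, a s := by
      rcases le_or_gt t T with hcase | hcase
      · have := hnn t₀ t ht
        have h1 : μ * (t - t₀) ≤ μ * T := by
          apply mul_le_mul_of_nonneg_left _ (le_of_lt hμ); linarith
        linarith
      · set T' : ℝ := max t₀ T with hT'def
        have hT'le : T' ≤ t := max_le ht (le_of_lt hcase)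
        have hT'T : T ≤ T' := le_max_right _ _
        have hT't₀ : t₀ ≤ T' := le_max_left _ _
        have hT'ub : T' ≤ t₀ + T := max_le (by linarith) (by linarith)
        set n := ⌊(t - T') / R⌋₊ with hn
        have hfl1 : (n : ℝ) * R ≤ t - T' := by
          have := Nat.floor_le (a := (t - T') / R) (div_nonneg (by linarith) (le_of_lt hR))
          calc (n : ℝ) * R ≤ (t - T') / R * R := by
                apply mul_le_mul_of_nonneg_right this (le_of_lt hR)
            _ = t - T' := by field_simp
        have hfl2 : (t - T') / R - 1 < (n : ℝ) := Nat.sub_one_lt_floor _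
        -- chunk sum
        have hsum : ∑ k ∈ Finset.range n, ∫ x in (T' + k * R)..(T' + (k + 1) * R), a x
            = ∫ x in T'..(T' + n * R), a x := by
          have := intervalIntegral.sum_integral_adjacent_intervals
            (f := a) (μ := volume) (a := fun k : ℕ => T' + k * R) (n := n)
            (fun k _ => hint _ _)
          simpa using this
        have hchunk : (n : ℝ) * ε ≤ ∫ x in T'..(T' + n * R), a x := by
          rw [← hsum]
          have h1 : ∀ k ∈ Finset.range n, ε ≤ ∫ x in (T' + k * R)..(T' + (k + 1) * R), a x := by
            intro k _
            have hbase : T ≤ T' + k * R := by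
              have : (0:ℝ) ≤ k * R := by positivity
              linarith
            have := hT (T' + k * R) hbase
            have heq : T' + (k + 1) * R = (T' + k * R) + R := by ring
            rw [heq]
            exact this
          calc (n : ℝ) * ε = ∑ _k ∈ Finset.range n, ε := by
                simp [mul_comm]
            _ ≤ _ := Finset.sum_le_sum h1
        have h2 : (∫ x in T'..(T' + n * R), a x) ≤ ∫ x in T'..t, a x :=
          hmono _ _ _ (by nlinarith) (by linarith)
        have h3 : (∫ x in T'..t, a x) ≤ ∫ x in t₀..t, a x := by
          rw [← intervalIntegral.integral_add_adjacent_intervals (hint t₀ T') (hint T' t)]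
          have := hnn t₀ T' hT't₀
          linarith
        have h4 : μ * (t - T') - ε ≤ (n : ℝ) * ε := by
          have : ((t - T') / R - 1) * ε ≤ (n : ℝ) * ε :=
            mul_le_mul_of_nonneg_right (le_of_lt hfl2) (le_of_lt hε)
          have heq : ((t - T') / R - 1) * ε = μ * (t - T') - ε := by
            rw [hμdef]; field_simp
          linarith [heq ▸ this]
        have h5 : μ * (t - t₀) - μ * T ≤ μ * (t - T') := by
          have : t - t₀ - T ≤ t - T' := by linarith
          nlinarith
        linarith
    have hexp : Real.exp (-∫ s in t₀..t, a s)
        ≤ Real.exp (ε + μ * T) * Real.exp (-μ * (t - t₀)) := by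
      rw [← Real.exp_add]
      apply Real.exp_le_exp.2
      linarith
    calc |x₀ * Real.exp (-∫ s in t₀..t, a s)|
        = Real.exp (-∫ s in t₀..t, a s) * |x₀| := by
          rw [abs_mul, abs_of_pos (Real.exp_pos _)]; ring
      _ ≤ (Real.exp (ε + μ * T) * Real.exp (-μ * (t - t₀))) * |x₀| :=
          mul_le_mul_of_nonneg_right hexp (abs_nonneg _)
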